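/- Let G = (V, E, m, m_0, m_1) be an admissible labelled graph (encoding a transport plan between finitely supported measures) whose underlying graph is a forest. If there is r > 0 such that all vertex labels m_0(v) and m_1(v) are integer multiples of r, then every edge label m(e) is an integer multiple of r. -/

import Mathlib

/-- A labelled graph: a finite vertex set `V`, a finite set `E` of oriented edges
(ordered pairs with distinct endpoints), an edge mass function `m` and vertex
labels `m₀`, `m₁`. -/
structure LabelledGraph (X : Type*) where
  V : Finset X
  E : Finset (X × X)
  m : X × X → ℝ
  m0 : X → ℝ
  m1 : X → ℝ

namespace LabelledGraph

variable {X : Type*} [DecidableEq X] (G : LabelledGraph X)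

/-- Admissibility of a labelled graph: it encodes a transport plan between the
probability measures given by the vertex labels. -/
def Admissible : Prop :=
  (∀ e ∈ G.E, e.1 ∈ G.V ∧ e.2 ∈ G.V ∧ e.1 ≠ e.2) ∧
  (∑ v ∈ G.V, G.m0 v = 1) ∧ (∑ v ∈ G.V, G.m1 v = 1) ∧
  (∀ v ∈ G.V, 0 ≤ G.m0 v ∧ G.m0 v ≤ 1) ∧ (∀ v ∈ G.V, 0 ≤ G.m1 v ∧ G.m1 v ≤ 1) ∧
  (∀ e ∈ G.E, 0 < G.m e ∧ G.m e ≤ 1) ∧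
  (∀ v ∈ G.V,
    G.m0 v + (∑ e ∈ G.E.filter (fun e => e.2 = v), G.m e)
      - (∑ e ∈ G.E.filter (fun e => e.1 = v), G.m e) = G.m1 v ∧
    (∑ e ∈ G.E.filter (fun e => e.2 = v), G.m e) ≤ G.m1 v ∧
    (∑ e ∈ G.E.filter (fun e => e.1 = v), G.m e) ≤ G.m0 v)

/-- Unoriented adjacency. -/
def Adj (x y : X) : Prop := (x, y) ∈ G.E ∨ (y, x) ∈ G.E

/-- The underlying unoriented graph is a forest: no antiparallel pair of edges and
no unoriented cycle. -/
def IsForest : Prop :=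
  (∀ x y, (x, y) ∈ G.E → (y, x) ∉ G.E) ∧
  ¬ ∃ (n : ℕ) (v : ℕ → X), 3 ≤ n ∧
      (∀ i j, i < n → j < n → i ≠ j → v i ≠ v j) ∧
      (∀ i < n, G.Adj (v i) (v ((i + 1) % n)))

end LabelledGraph

open SimpleGraph in
private lemma walk_getVert_support_get {X : Type*} {G : SimpleGraph X} {u v : X}
    (p : G.Walk u v) (i : ℕ) (hi : i < p.support.length) :
    p.getVert i = p.support.get ⟨i, hi⟩ := by
  induction p generalizing i with
  | nil =>
    simp only [Walk.support_nil, List.length_singleton, Nat.lt_one_iff] at hi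
    subst hi; simp [Walk.getVert]
  | cons h q ih =>
    match i with
    | 0 => simp [Walk.getVert]
    | Nat.succ i =>
      simp only [Walk.support_cons, List.length_cons] at hi ⊢
      simpa [Walk.getVert_cons_succ] using ih i (by omega)

private lemma sum_multiples {X : Type*} (s : Finset X) (f : X → ℝ) (r : ℝ)
    (h : ∀ v ∈ s, ∃ z : ℤ, f v = z * r) : ∃ z : ℤ, ∑ v ∈ s, f v = z * r := by
  classical
  induction s using Finset.cons_induction with
  | empty => exact ⟨0, by simp⟩
  | cons a s ha ih =>
    obtain ⟨z1, h1⟩ := h a (Finset.mem_cons_self a s)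
    obtain ⟨z2, h2⟩ := ih (fun v hv => h v (Finset.mem_cons.2 (Or.inr hv)))
    exact ⟨z1 + z2, by rw [Finset.sum_cons, h1, h2]; push_cast; ring⟩

/-- in an admissible labelled graph which is a forest, if all vertex
labels are integer multiples of `r > 0`, then so are all edge labels. -/
theorem stmt15 {X : Type*} [DecidableEq X] (G : LabelledGraph X)
    (hadm : G.Admissible) (hforest : G.IsForest)
    (r : ℝ) (hr : 0 < r)
    (hm0 : ∀ v ∈ G.V, ∃ z : ℤ, G.m0 v = z * r)
    (hm1 : ∀ v ∈ G.V, ∃ z : ℤ, G.m1 v = z * r) :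
    ∀ e ∈ G.E, ∃ z : ℤ, G.m e = z * r := by
  classical
  obtain ⟨hE, -, -, -, -, -, hbal⟩ := hadm
  intro e he
  -- the underlying simple graph
  set G' : SimpleGraph X :=
    { Adj := fun x y => x ≠ y ∧ G.Adj x y
      symm := ⟨fun x y h => ⟨h.1.symm, h.2.symm⟩⟩
      loopless := ⟨fun x h => h.1 rfl⟩ } with hG'
  have hG'adj : ∀ x y, G'.Adj x y ↔ x ≠ y ∧ G.Adj x y := fun x y => Iff.rfl
  -- acyclicity
  have hacyc : G'.IsAcyclic := by
    intro u p hp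
    apply hforest.2
    have h3 := hp.three_le_length
    have hlen : p.support.length = p.length + 1 := SimpleGraph.Walk.length_support p
    have htail : p.support.tail.length = p.length := by
      rw [List.length_tail, hlen]; omega
    refine ⟨p.length, fun i => p.getVert (i + 1), h3, ?_, ?_⟩
    · intro i j hi hj hij hv
      have hget : ∀ k (hk : k < p.length),
          p.getVert (k + 1) = p.support.tail.get ⟨k, by omega⟩ := by
        intro k hk
        rw [List.get_tail _ _ (by omega) (by omega)]
        exact walk_getVert_support_get p (k + 1) (by omega)
      have hv' : p.getVert (i + 1) = p.getVert (j + 1) := hv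
      rw [hget i hi, hget j hj] at hv'
      have := (hp.2.get_inj_iff).mp hv'
      exact hij (by simpa using congrArg Fin.val this)
    · intro i hi
      show G.Adj (p.getVert (i + 1)) (p.getVert ((i + 1) % p.length + 1))
      rcases Nat.lt_or_ge (i + 1) p.length with h | h
      · rw [Nat.mod_eq_of_lt h]
        exact (p.adj_getVert_succ h).2
      · have hieq : i + 1 = p.length := by omega
        rw [hieq, Nat.mod_self, SimpleGraph.Walk.getVert_length]
        have h0 := p.adj_getVert_succ (show 0 < p.length by omega)
        rw [SimpleGraph.Walk.getVert_zero] at h0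
        exact h0.2
  -- the edge is a bridge
  have he1V : e.1 ∈ G.V := (hE e he).1
  have hne : e.1 ≠ e.2 := (hE e he).2.2
  have hadj : G'.Adj e.1 e.2 := ⟨hne, Or.inl (by simpa using he)⟩
  have hbridge := SimpleGraph.isAcyclic_iff_forall_adj_isBridge.mp hacyc hadj
  rw [SimpleGraph.isBridge_iff] at hbridge
  set H : SimpleGraph X := G' \ SimpleGraph.fromEdgeSet {s(e.1, e.2)} with hH
  -- the cut
  set S : Finset X := G.V.filter (fun w => H.Reachable e.1 w) with hS
  have he1S : e.1 ∈ S := Finset.mem_filter.2 ⟨he1V, SimpleGraph.Reachable.refl _⟩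
  have he2S : e.2 ∉ S := fun h => hbridge (Finset.mem_filter.1 h).2
  -- edges other than e do not cross the cut
  have hcross : ∀ f ∈ G.E, f ≠ e → (f.1 ∈ S ↔ f.2 ∈ S) := by
    intro f hf hfe
    have hfne : f.1 ≠ f.2 := (hE f hf).2.2
    have hHadj : H.Adj f.1 f.2 := by
      rw [hH, SimpleGraph.sdiff_adj]
      refine ⟨⟨hfne, Or.inl (by simpa using hf)⟩, ?_⟩
      rw [SimpleGraph.fromEdgeSet_adj]
      rintro ⟨hmem, -⟩
      simp only [Set.mem_singleton_iff, Sym2.eq, Sym2.rel_iff', Prod.mk.injEq,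
        Prod.swap_prod_mk] at hmem
      rcases hmem with ⟨h1, h2⟩ | ⟨h1, h2⟩
      · exact hfe (Prod.ext h1 h2)
      · exact hforest.1 e.1 e.2 (by simpa using he) (by rw [← h1, ← h2]; simpa using hf)
    constructor
    · intro h1
      exact Finset.mem_filter.2 ⟨(hE f hf).2.1,
        (Finset.mem_filter.1 h1).2.trans hHadj.reachable⟩
    · intro h2
      exact Finset.mem_filter.2 ⟨(hE f hf).1,
        (Finset.mem_filter.1 h2).2.trans hHadj.symm.reachable⟩
  -- sum the balance equations over S
  have key : ∀ v ∈ S, G.m1 v - G.m0 v =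
      (∑ f ∈ G.E.filter (fun f => f.2 = v), G.m f)
        - (∑ f ∈ G.E.filter (fun f => f.1 = v), G.m f) := by
    intro v hv
    have := (hbal v (Finset.mem_filter.1 hv).1).1
    linarith
  have hswap : ∀ (g : X × X → X), ∑ v ∈ S, ∑ f ∈ G.E.filter (fun f => g f = v), G.m f
      = ∑ f ∈ G.E, if g f ∈ S then G.m f else 0 := by
    intro g
    simp_rw [Finset.sum_filter]
    rw [Finset.sum_comm]
    refine Finset.sum_congr rfl fun f _ => ?_
    rw [Finset.sum_ite_eq S (g f) (fun _ => G.m f)]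
  have hsum : ∑ v ∈ S, (G.m1 v - G.m0 v)
      = ∑ f ∈ G.E, ((if f.2 ∈ S then G.m f else 0) - (if f.1 ∈ S then G.m f else 0)) := by
    rw [Finset.sum_congr rfl key, Finset.sum_sub_distrib, Finset.sum_sub_distrib,
      hswap (fun f => f.2), hswap (fun f => f.1)]
  have hval : ∑ f ∈ G.E, ((if f.2 ∈ S then G.m f else 0) - (if f.1 ∈ S then G.m f else 0))
      = - G.m e := by
    rw [Finset.sum_eq_single e]
    · simp [he1S, he2S]
    · intro f hf hfe
      rcases (hcross f hf hfe) with ⟨h1, h2⟩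
      by_cases hf1 : f.1 ∈ S
      · simp [hf1, h1 hf1]
      · have hf2 : f.2 ∉ S := fun h => hf1 (h2 h)
        simp [hf1, hf2]
    · intro h; exact absurd he h
  have : G.m e = ∑ v ∈ S, (G.m0 v - G.m1 v) := by
    have := hsum.trans hval
    have h2 : ∑ v ∈ S, (G.m0 v - G.m1 v) = -∑ v ∈ S, (G.m1 v - G.m0 v) := by
      rw [← Finset.sum_neg_distrib]; exact Finset.sum_congr rfl fun v _ => by ring
    rw [h2, this]; ring
  rw [this]
  refine sum_multiples S _ r fun v hv => ?_
  have hvV : v ∈ G.V := (Finset.mem_filter.1 hv).1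
  obtain ⟨z0, h0⟩ := hm0 v hvV
  obtain ⟨z1, h1⟩ := hm1 v hvV
  exact ⟨z0 - z1, by rw [h0, h1]; push_cast; ring⟩
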